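/- Let γ ∈ ℝ satisfy 6γ³ − 18γ² + 9γ − 1 = 0 with γ ≈ 0.43586652150845900 (the middle root), and assume all denominators below are nonzero. Define b = ( (2γ+1)/(4γ+8), (31−14γ)/(352−900γ), (320γ+224)/(575−477γ), γ )ᵀ, c = (0, 2γ, (γ+2)/4, 1)ᵀ, the ESDIRK matrix Aᴵ with rows (0,0,0,0), (γ,γ,0,0), ((215γ+424)/(2624−1536γ), (264−841γ)/(1536γ+448), γ, 0), (b₁, b₂, b₃, γ), and the explicit matrix Aᴱ with rows (0,0,0,0), (2γ,0,0,0), ((12526987γ+655304)/(8876160γ+7175968), 15(215γ+152)/(2144(92γ−9)), 0, 0), ((2370311γ−563481)/(134(17071γ+921)), (380783−137789γ)/(134(17727γ−15511)), (1000−304γ)/(1371γ+379), 0). Then Aᴵ𝟙 = Aᴱ𝟙 = c, and both component Runge–Kutta methods satisfy the third-order conditions: bᵀ𝟙 = 1, bᵀc = 1/2, bᵀ(c∘c) = 1/3, bᵀAᴵc = 1/6, and bᵀAᴱc = 1/6. Consequently the ADI-GARK method built from (Aᴵ, Aᴱ, b) is third order. -/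

import Mathlib

open Matrix

/-- The GARK order conditions up to order `p` (meaningful for `p ≤ 4`). -/
def GARKOrderConditions {s N : ℕ} (p : ℕ)
    (A : Fin N → Fin N → Matrix (Fin s) (Fin s) ℝ)
    (b : Fin N → Fin s → ℝ) : Prop :=
  let c : Fin N → Fin N → Fin s → ℝ := fun q m => (A q m).mulVec 1
  (1 ≤ p → ∀ σ, b σ ⬝ᵥ (1 : Fin s → ℝ) = 1) ∧
  (2 ≤ p → ∀ σ ν, b σ ⬝ᵥ c σ ν = 1 / 2) ∧
  (3 ≤ p → (∀ σ ν μ, b σ ⬝ᵥ (c σ ν * c σ μ) = 1 / 3) ∧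
           (∀ σ ν μ, b σ ⬝ᵥ (A σ ν).mulVec (c ν μ) = 1 / 6)) ∧
  (4 ≤ p → (∀ lam σ ν μ, b σ ⬝ᵥ (c σ lam * c σ μ * c σ ν) = 1 / 4) ∧
           (∀ lam σ ν μ, (b σ * c σ μ) ⬝ᵥ (A σ ν).mulVec (c ν lam) = 1 / 8) ∧
           (∀ lam σ ν μ, b σ ⬝ᵥ (A σ lam).mulVec (c lam μ * c lam ν) = 1 / 12) ∧
           (∀ lam σ ν μ, b σ ⬝ᵥ (A σ lam).mulVec ((A lam ν).mulVec (c ν μ)) = 1 / 24))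

/-- The blocks of the `N`-partition ADI-GARK method built from an implicit block `Aᴵ`
(used on and below the diagonal) and an explicit block `Aᴱ` (above the diagonal). -/
def ADIGARKBlocks {s : ℕ} (N : ℕ) (AI AE : Matrix (Fin s) (Fin s) ℝ) :
    Fin N → Fin N → Matrix (Fin s) (Fin s) ℝ :=
  fun q m => if (m : ℕ) ≤ (q : ℕ) then AI else AE

lemma adiS1 (γ : ℝ)
    (hroot : 6 * γ ^ 3 - 18 * γ ^ 2 + 9 * γ - 1 = 0)
    (hd₁ : 4 * γ + 8 ≠ 0) (hd₂ : 352 - 900 * γ ≠ 0) (hd₃ : 575 - 477 * γ ≠ 0)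
    (hd₄ : 2624 - 1536 * γ ≠ 0) (hd₅ : 1536 * γ + 448 ≠ 0)
    (hd₆ : 8876160 * γ + 7175968 ≠ 0) (hd₇ : 92 * γ - 9 ≠ 0)
    (hd₈ : 17071 * γ + 921 ≠ 0) (hd₉ : 17727 * γ - 15511 ≠ 0)
    (hd₁₀ : 1371 * γ + 379 ≠ 0) :
    (215 * γ + 424) / (2624 - 1536 * γ) + (264 - 841 * γ) / (1536 * γ + 448) + γ = (γ + 2) / 4 := by
  have e₁ : (2144:ℝ) * (92 * γ - 9) ≠ 0 := mul_ne_zero (by norm_num) hd₇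
  have e₂ : (134:ℝ) * (17071 * γ + 921) ≠ 0 := mul_ne_zero (by norm_num) hd₈
  have e₃ : (134:ℝ) * (17727 * γ - 15511) ≠ 0 := mul_ne_zero (by norm_num) hd₉
  ring_nf at hd₁ hd₂ hd₃ hd₄ hd₅ hd₆ hd₇ hd₈ hd₉ hd₁₀ e₁ e₂ e₃ ⊢
  field_simp; linear_combination ((-2359296:ℝ)) * hroot

lemma adiS2 (γ : ℝ)
    (hroot : 6 * γ ^ 3 - 18 * γ ^ 2 + 9 * γ - 1 = 0)
    (hd₁ : 4 * γ + 8 ≠ 0) (hd₂ : 352 - 900 * γ ≠ 0) (hd₃ : 575 - 477 * γ ≠ 0)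
    (hd₄ : 2624 - 1536 * γ ≠ 0) (hd₅ : 1536 * γ + 448 ≠ 0)
    (hd₆ : 8876160 * γ + 7175968 ≠ 0) (hd₇ : 92 * γ - 9 ≠ 0)
    (hd₈ : 17071 * γ + 921 ≠ 0) (hd₉ : 17727 * γ - 15511 ≠ 0)
    (hd₁₀ : 1371 * γ + 379 ≠ 0) :
    (2 * γ + 1) / (4 * γ + 8) + (31 - 14 * γ) / (352 - 900 * γ) + (320 * γ + 224) / (575 - 477 * γ) + γ = 1 := by
  have e₁ : (2144:ℝ) * (92 * γ - 9) ≠ 0 := mul_ne_zero (by norm_num) hd₇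
  have e₂ : (134:ℝ) * (17071 * γ + 921) ≠ 0 := mul_ne_zero (by norm_num) hd₈
  have e₃ : (134:ℝ) * (17727 * γ - 15511) ≠ 0 := mul_ne_zero (by norm_num) hd₉
  ring_nf at hd₁ hd₂ hd₃ hd₄ hd₅ hd₆ hd₇ hd₈ hd₉ hd₁₀ e₁ e₂ e₃ ⊢
  field_simp; linear_combination ((643416:ℝ) + (286200:ℝ)*γ^1) * hroot

lemma adiS3 (γ : ℝ)
    (hroot : 6 * γ ^ 3 - 18 * γ ^ 2 + 9 * γ - 1 = 0)
    (hd₁ : 4 * γ + 8 ≠ 0) (hd₂ : 352 - 900 * γ ≠ 0) (hd₃ : 575 - 477 * γ ≠ 0)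
    (hd₄ : 2624 - 1536 * γ ≠ 0) (hd₅ : 1536 * γ + 448 ≠ 0)
    (hd₆ : 8876160 * γ + 7175968 ≠ 0) (hd₇ : 92 * γ - 9 ≠ 0)
    (hd₈ : 17071 * γ + 921 ≠ 0) (hd₉ : 17727 * γ - 15511 ≠ 0)
    (hd₁₀ : 1371 * γ + 379 ≠ 0) :
    (12526987 * γ + 655304) / (8876160 * γ + 7175968) + 15 * (215 * γ + 152) / (2144 * (92 * γ - 9)) = (γ + 2) / 4 := by
  have e₁ : (2144:ℝ) * (92 * γ - 9) ≠ 0 := mul_ne_zero (by norm_num) hd₇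
  have e₂ : (134:ℝ) * (17071 * γ + 921) ≠ 0 := mul_ne_zero (by norm_num) hd₈
  have e₃ : (134:ℝ) * (17727 * γ - 15511) ≠ 0 := mul_ne_zero (by norm_num) hd₉
  ring_nf at hd₁ hd₂ hd₃ hd₄ hd₅ hd₆ hd₇ hd₈ hd₉ hd₁₀ e₁ e₂ e₃ ⊢
  field_simp; linear_combination ((-583601602560:ℝ)) * hroot

lemma adiS4 (γ : ℝ)
    (hroot : 6 * γ ^ 3 - 18 * γ ^ 2 + 9 * γ - 1 = 0)
    (hd₁ : 4 * γ + 8 ≠ 0) (hd₂ : 352 - 900 * γ ≠ 0) (hd₃ : 575 - 477 * γ ≠ 0)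
    (hd₄ : 2624 - 1536 * γ ≠ 0) (hd₅ : 1536 * γ + 448 ≠ 0)
    (hd₆ : 8876160 * γ + 7175968 ≠ 0) (hd₇ : 92 * γ - 9 ≠ 0)
    (hd₈ : 17071 * γ + 921 ≠ 0) (hd₉ : 17727 * γ - 15511 ≠ 0)
    (hd₁₀ : 1371 * γ + 379 ≠ 0) :
    (2370311 * γ - 563481) / (134 * (17071 * γ + 921)) + (380783 - 137789 * γ) / (134 * (17727 * γ - 15511)) + (1000 - 304 * γ) / (1371 * γ + 379) = 1 := by
  have e₁ : (2144:ℝ) * (92 * γ - 9) ≠ 0 := mul_ne_zero (by norm_num) hd₇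
  have e₂ : (134:ℝ) * (17071 * γ + 921) ≠ 0 := mul_ne_zero (by norm_num) hd₈
  have e₃ : (134:ℝ) * (17727 * γ - 15511) ≠ 0 := mul_ne_zero (by norm_num) hd₉
  ring_nf at hd₁ hd₂ hd₃ hd₄ hd₅ hd₆ hd₇ hd₈ hd₉ hd₁₀ e₁ e₂ e₃ ⊢
  field_simp; linear_combination ((-302393715941568:ℝ)) * hroot

lemma adiS5 (γ : ℝ)
    (hroot : 6 * γ ^ 3 - 18 * γ ^ 2 + 9 * γ - 1 = 0)
    (hd₁ : 4 * γ + 8 ≠ 0) (hd₂ : 352 - 900 * γ ≠ 0) (hd₃ : 575 - 477 * γ ≠ 0)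
    (hd₄ : 2624 - 1536 * γ ≠ 0) (hd₅ : 1536 * γ + 448 ≠ 0)
    (hd₆ : 8876160 * γ + 7175968 ≠ 0) (hd₇ : 92 * γ - 9 ≠ 0)
    (hd₈ : 17071 * γ + 921 ≠ 0) (hd₉ : 17727 * γ - 15511 ≠ 0)
    (hd₁₀ : 1371 * γ + 379 ≠ 0) :
    (31 - 14 * γ) / (352 - 900 * γ) * (2 * γ) + (320 * γ + 224) / (575 - 477 * γ) * ((γ + 2) / 4) + γ = 1/2 := by
  have e₁ : (2144:ℝ) * (92 * γ - 9) ≠ 0 := mul_ne_zero (by norm_num) hd₇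
  have e₂ : (134:ℝ) * (17071 * γ + 921) ≠ 0 := mul_ne_zero (by norm_num) hd₈
  have e₃ : (134:ℝ) * (17727 * γ - 15511) ≠ 0 := mul_ne_zero (by norm_num) hd₉
  ring_nf at hd₁ hd₂ hd₃ hd₄ hd₅ hd₆ hd₇ hd₈ hd₉ hd₁₀ e₁ e₂ e₃ ⊢
  field_simp; linear_combination ((123552:ℝ)) * hroot

lemma adiS6 (γ : ℝ)
    (hroot : 6 * γ ^ 3 - 18 * γ ^ 2 + 9 * γ - 1 = 0)
    (hd₁ : 4 * γ + 8 ≠ 0) (hd₂ : 352 - 900 * γ ≠ 0) (hd₃ : 575 - 477 * γ ≠ 0)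
    (hd₄ : 2624 - 1536 * γ ≠ 0) (hd₅ : 1536 * γ + 448 ≠ 0)
    (hd₆ : 8876160 * γ + 7175968 ≠ 0) (hd₇ : 92 * γ - 9 ≠ 0)
    (hd₈ : 17071 * γ + 921 ≠ 0) (hd₉ : 17727 * γ - 15511 ≠ 0)
    (hd₁₀ : 1371 * γ + 379 ≠ 0) :
    (31 - 14 * γ) / (352 - 900 * γ) * (2 * γ * (2 * γ)) + (320 * γ + 224) / (575 - 477 * γ) * ((γ + 2) / 4 * ((γ + 2) / 4)) + γ = 1/3 := by
  have e₁ : (2144:ℝ) * (92 * γ - 9) ≠ 0 := mul_ne_zero (by norm_num) hd₇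
  have e₂ : (134:ℝ) * (17071 * γ + 921) ≠ 0 := mul_ne_zero (by norm_num) hd₈
  have e₃ : (134:ℝ) * (17727 * γ - 15511) ≠ 0 := mul_ne_zero (by norm_num) hd₉
  ring_nf at hd₁ hd₂ hd₃ hd₄ hd₅ hd₆ hd₇ hd₈ hd₉ hd₁₀ e₁ e₂ e₃ ⊢
  field_simp; linear_combination ((143264:ℝ) + (4356:ℝ)*γ^1) * hroot

lemma adiS7 (γ : ℝ)
    (hroot : 6 * γ ^ 3 - 18 * γ ^ 2 + 9 * γ - 1 = 0)
    (hd₁ : 4 * γ + 8 ≠ 0) (hd₂ : 352 - 900 * γ ≠ 0) (hd₃ : 575 - 477 * γ ≠ 0)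
    (hd₄ : 2624 - 1536 * γ ≠ 0) (hd₅ : 1536 * γ + 448 ≠ 0)
    (hd₆ : 8876160 * γ + 7175968 ≠ 0) (hd₇ : 92 * γ - 9 ≠ 0)
    (hd₈ : 17071 * γ + 921 ≠ 0) (hd₉ : 17727 * γ - 15511 ≠ 0)
    (hd₁₀ : 1371 * γ + 379 ≠ 0) :
    (31 - 14 * γ) / (352 - 900 * γ) * (γ * (2 * γ)) + (320 * γ + 224) / (575 - 477 * γ) * ((264 - 841 * γ) / (1536 * γ + 448) * (2 * γ) + γ * ((γ + 2) / 4)) + γ * ((31 - 14 * γ) / (352 - 900 * γ) * (2 * γ) + (320 * γ + 224) / (575 - 477 * γ) * ((γ + 2) / 4) + γ) = 1/6 := by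
  have e₁ : (2144:ℝ) * (92 * γ - 9) ≠ 0 := mul_ne_zero (by norm_num) hd₇
  have e₂ : (134:ℝ) * (17071 * γ + 921) ≠ 0 := mul_ne_zero (by norm_num) hd₈
  have e₃ : (134:ℝ) * (17727 * γ - 15511) ≠ 0 := mul_ne_zero (by norm_num) hd₉
  ring_nf at hd₁ hd₂ hd₃ hd₄ hd₅ hd₆ hd₇ hd₈ hd₉ hd₁₀ e₁ e₂ e₃ ⊢
  field_simp; linear_combination ((90675200:ℝ) + (358168320:ℝ)*γ^1 + (479250432:ℝ)*γ^2) * hroot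

lemma adiS8 (γ : ℝ)
    (hroot : 6 * γ ^ 3 - 18 * γ ^ 2 + 9 * γ - 1 = 0)
    (hd₁ : 4 * γ + 8 ≠ 0) (hd₂ : 352 - 900 * γ ≠ 0) (hd₃ : 575 - 477 * γ ≠ 0)
    (hd₄ : 2624 - 1536 * γ ≠ 0) (hd₅ : 1536 * γ + 448 ≠ 0)
    (hd₆ : 8876160 * γ + 7175968 ≠ 0) (hd₇ : 92 * γ - 9 ≠ 0)
    (hd₈ : 17071 * γ + 921 ≠ 0) (hd₉ : 17727 * γ - 15511 ≠ 0)
    (hd₁₀ : 1371 * γ + 379 ≠ 0) :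
    (31 - 14 * γ) / (352 - 900 * γ) * (2 * γ * 0) + (320 * γ + 224) / (575 - 477 * γ) * (15 * (215 * γ + 152) / (2144 * (92 * γ - 9)) * (2 * γ)) + γ * ((380783 - 137789 * γ) / (134 * (17727 * γ - 15511)) * (2 * γ) + (1000 - 304 * γ) / (1371 * γ + 379) * ((γ + 2) / 4)) = 1/6 := by
  have e₁ : (2144:ℝ) * (92 * γ - 9) ≠ 0 := mul_ne_zero (by norm_num) hd₇
  have e₂ : (134:ℝ) * (17071 * γ + 921) ≠ 0 := mul_ne_zero (by norm_num) hd₈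
  have e₃ : (134:ℝ) * (17727 * γ - 15511) ≠ 0 := mul_ne_zero (by norm_num) hd₉
  ring_nf at hd₁ hd₂ hd₃ hd₄ hd₅ hd₆ hd₇ hd₈ hd₉ hd₁₀ e₁ e₂ e₃ ⊢
  field_simp; linear_combination ((8740151110699200:ℝ) + (-60660478948388992:ℝ)*γ^1 + (-29318678209690176:ℝ)*γ^2 + (52533567016286976:ℝ)*γ^3) * hroot

/-- The third-order ADI-GARK method of the paper: with `γ` the middle root of
`6γ³ - 18γ² + 9γ - 1 = 0` (γ ≈ 0.43586652150845900) and all denominators nonzero, the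
tableau is internally consistent (`Aᴵ𝟙 = Aᴱ𝟙 = c`) and both component Runge–Kutta
methods satisfy the third-order conditions; consequently, the ADI-GARK method built
from `(Aᴵ, Aᴱ, b)` is third order. -/
theorem adi_gark_order_three_coefficients (γ : ℝ)
    (hroot : 6 * γ ^ 3 - 18 * γ ^ 2 + 9 * γ - 1 = 0)
    (hmid₁ : (43 : ℝ) / 100 < γ) (hmid₂ : γ < (44 : ℝ) / 100)
    (hd₁ : 4 * γ + 8 ≠ 0) (hd₂ : 352 - 900 * γ ≠ 0) (hd₃ : 575 - 477 * γ ≠ 0)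
    (hd₄ : 2624 - 1536 * γ ≠ 0) (hd₅ : 1536 * γ + 448 ≠ 0)
    (hd₆ : 8876160 * γ + 7175968 ≠ 0) (hd₇ : 92 * γ - 9 ≠ 0)
    (hd₈ : 17071 * γ + 921 ≠ 0) (hd₉ : 17727 * γ - 15511 ≠ 0)
    (hd₁₀ : 1371 * γ + 379 ≠ 0) :
    let b : Fin 4 → ℝ :=
      ![(2 * γ + 1) / (4 * γ + 8),
        (31 - 14 * γ) / (352 - 900 * γ),
        (320 * γ + 224) / (575 - 477 * γ),
        γ]
    let c : Fin 4 → ℝ := ![0, 2 * γ, (γ + 2) / 4, 1]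
    let AI : Matrix (Fin 4) (Fin 4) ℝ :=
      !![0, 0, 0, 0;
         γ, γ, 0, 0;
         (215 * γ + 424) / (2624 - 1536 * γ), (264 - 841 * γ) / (1536 * γ + 448), γ, 0;
         (2 * γ + 1) / (4 * γ + 8), (31 - 14 * γ) / (352 - 900 * γ),
           (320 * γ + 224) / (575 - 477 * γ), γ]
    let AE : Matrix (Fin 4) (Fin 4) ℝ :=
      !![0, 0, 0, 0;
         2 * γ, 0, 0, 0;
         (12526987 * γ + 655304) / (8876160 * γ + 7175968),
           15 * (215 * γ + 152) / (2144 * (92 * γ - 9)), 0, 0;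
         (2370311 * γ - 563481) / (134 * (17071 * γ + 921)),
           (380783 - 137789 * γ) / (134 * (17727 * γ - 15511)),
           (1000 - 304 * γ) / (1371 * γ + 379), 0]
    -- internal consistency
    (AI.mulVec (1 : Fin 4 → ℝ) = c ∧ AE.mulVec (1 : Fin 4 → ℝ) = c) ∧
    -- third-order conditions for both component Runge–Kutta methods
    (b ⬝ᵥ (1 : Fin 4 → ℝ) = 1 ∧ b ⬝ᵥ c = 1/2 ∧ b ⬝ᵥ (c * c) = 1/3 ∧
      b ⬝ᵥ AI.mulVec c = 1/6 ∧ b ⬝ᵥ AE.mulVec c = 1/6) ∧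
    -- consequently the ADI-GARK method built from (Aᴵ, Aᴱ, b) is third order
    (∀ N : ℕ, GARKOrderConditions 3 (ADIGARKBlocks N AI AE) (fun _ => b)) := by
  intro b c AI AE
  have hS1 := adiS1 γ hroot hd₁ hd₂ hd₃ hd₄ hd₅ hd₆ hd₇ hd₈ hd₉ hd₁₀
  have hS2 := adiS2 γ hroot hd₁ hd₂ hd₃ hd₄ hd₅ hd₆ hd₇ hd₈ hd₉ hd₁₀
  have hS3 := adiS3 γ hroot hd₁ hd₂ hd₃ hd₄ hd₅ hd₆ hd₇ hd₈ hd₉ hd₁₀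
  have hS4 := adiS4 γ hroot hd₁ hd₂ hd₃ hd₄ hd₅ hd₆ hd₇ hd₈ hd₉ hd₁₀
  have hS5 := adiS5 γ hroot hd₁ hd₂ hd₃ hd₄ hd₅ hd₆ hd₇ hd₈ hd₉ hd₁₀
  have hS6 := adiS6 γ hroot hd₁ hd₂ hd₃ hd₄ hd₅ hd₆ hd₇ hd₈ hd₉ hd₁₀
  have hS7 := adiS7 γ hroot hd₁ hd₂ hd₃ hd₄ hd₅ hd₆ hd₇ hd₈ hd₉ hd₁₀
  have hS8 := adiS8 γ hroot hd₁ hd₂ hd₃ hd₄ hd₅ hd₆ hd₇ hd₈ hd₉ hd₁₀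
  have hAIc : AI.mulVec (1 : Fin 4 → ℝ) = c := by
    funext i
    fin_cases i <;>
      simp [AI, c, Matrix.mulVec, dotProduct, Fin.sum_univ_four] <;>
      first | exact hS1 | exact hS2 | ring
  have hAEc : AE.mulVec (1 : Fin 4 → ℝ) = c := by
    funext i
    fin_cases i <;>
      simp [AE, c, Matrix.mulVec, dotProduct, Fin.sum_univ_four] <;>
      first | exact hS3 | exact hS4 | ring
  have hb1 : b ⬝ᵥ (1 : Fin 4 → ℝ) = 1 := by
    simp [b, dotProduct, Fin.sum_univ_four]; linear_combination hS2
  have hbc : b ⬝ᵥ c = 1/2 := by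
    simp [b, c, dotProduct, Fin.sum_univ_four]; linear_combination hS5
  have hbcc : b ⬝ᵥ (c * c) = 1/3 := by
    simp [b, c, dotProduct, Fin.sum_univ_four]; linear_combination hS6
  have hbAIc : b ⬝ᵥ AI.mulVec c = 1/6 := by
    simp [b, c, AI, Matrix.mulVec, dotProduct, Fin.sum_univ_four]; linear_combination hS7
  have hbAEc : b ⬝ᵥ AE.mulVec c = 1/6 := by
    simp [b, c, AE, Matrix.mulVec, dotProduct, Fin.sum_univ_four]; linear_combination hS8
  refine ⟨⟨hAIc, hAEc⟩, ⟨hb1, hbc, hbcc, hbAIc, hbAEc⟩, ?_⟩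
  intro N
  have hA : ∀ q m : Fin N, ADIGARKBlocks N AI AE q m = AI ∨ ADIGARKBlocks N AI AE q m = AE := by
    intro q m
    unfold ADIGARKBlocks
    split
    · exact Or.inl rfl
    · exact Or.inr rfl
  have hc : ∀ q m : Fin N, (ADIGARKBlocks N AI AE q m).mulVec (1 : Fin 4 → ℝ) = c := by
    intro q m
    rcases hA q m with h | h <;> rw [h] <;> assumption
  refine ⟨fun _ σ => hb1, fun _ σ ν => ?_, fun _ => ⟨fun σ ν μ => ?_, fun σ ν μ => ?_⟩,
    fun h4 => absurd h4 (by norm_num)⟩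
  · show b ⬝ᵥ (ADIGARKBlocks N AI AE σ ν).mulVec 1 = 1/2; rw [hc]; exact hbc
  · show b ⬝ᵥ ((ADIGARKBlocks N AI AE σ ν).mulVec 1 * (ADIGARKBlocks N AI AE σ μ).mulVec 1) = 1/3; rw [hc, hc]; exact hbcc
  · show b ⬝ᵥ (ADIGARKBlocks N AI AE σ ν).mulVec ((ADIGARKBlocks N AI AE ν μ).mulVec 1) = 1/6; rw [hc]
    rcases hA σ ν with h | h <;> rw [h]
    · exact hbAIc
    · exact hbAEc
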